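/- Let C ≥ 2 and let α_1, …, α_C > 0 with α_0 = Σ_{k=1}^C α_k. Let D_α(p) = (Γ(α_0)/∏_{k=1}^C Γ(α_k)) · ∏_{k=1}^C p_k^{α_k − 1} denote the Dirichlet density. Then the Dirichlet expectation of the normalized Shannon entropy H̃(p) = (1/log C) Σ_{k=1}^C p_k log(1/p_k) equals (1/log C)·[ψ(α_0 + 1) − Σ_{k=1}^C (α_k/α_0) ψ(α_k + 1)], where ψ is the digamma function (the derivative of log Γ). Concretely, the integral over the open set {x ∈ ℝ^{C−1} : x_i > 0, Σ_{i<C} x_i < 1}, with respect to (C−1)-dimensional Lebesgue measure and with p_i = x_i for i < C and p_C = 1 − Σ_{i<C} x_i, of H̃(p)·D_α(p) equals this value. -/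

import Mathlib

open Finset MeasureTheory
open Set

/-- The digamma function `ψ`, the derivative of `log ∘ Γ`. -/
noncomputable def digamma (x : ℝ) : ℝ :=
  deriv (fun t : ℝ => Real.log (Real.Gamma t)) x

/-- The probability vector on `n+1` categories parameterized by
`x ∈ ℝⁿ`: `p_i = x_i` for `i < n` and `p_n = 1 - ∑ x_i`. -/
noncomputable def simplexCoords (n : ℕ) (x : Fin n → ℝ) : Fin (n + 1) → ℝ :=
  Fin.snoc x (1 - ∑ i, x i)

/-- The Dirichlet density `D_α(p) = (Γ(α₀)/∏ Γ(α_k)) ∏ p_k^{α_k - 1}` with respect to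
`n`-dimensional Lebesgue measure on the parameterized simplex, where `α₀ = ∑ α_k`. -/
noncomputable def dirichletDensity (n : ℕ) (α : Fin (n + 1) → ℝ) (x : Fin n → ℝ) : ℝ :=
  (Real.Gamma (∑ k, α k) / ∏ k, Real.Gamma (α k)) *
    ∏ k, (simplexCoords n x k) ^ (α k - 1)


lemma realBeta_integrableOn {a b : ℝ} (ha : 0 < a) (hb : 0 < b) :
    IntegrableOn (fun t : ℝ => t ^ (a - 1) * (1 - t) ^ (b - 1)) (Ioo 0 1) := by
  have hc : IntervalIntegrable (fun x : ℝ =>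
      (x : ℂ) ^ ((a : ℂ) - 1) * ((1 : ℂ) - x) ^ ((b : ℂ) - 1)) volume 0 1 :=
    Complex.betaIntegral_convergent (by simpa using ha) (by simpa using hb)
  have h2 : IntegrableOn (fun x : ℝ =>
      (x : ℂ) ^ ((a : ℂ) - 1) * ((1 : ℂ) - x) ^ ((b : ℂ) - 1)) (Ioo 0 1) :=
    (hc.1).mono_set Ioo_subset_Ioc_self
  have h3 := h2.re
  refine IntegrableOn.congr_fun h3 ?_ measurableSet_Ioo
  intro x hx
  have hx0 : (0:ℝ) ≤ x := hx.1.le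
  have hx1 : (0:ℝ) ≤ 1 - x := by linarith [hx.2]
  have e1 : (x : ℂ) ^ ((a : ℂ) - 1) = ((x ^ (a-1) : ℝ) : ℂ) := by
    rw [Complex.ofReal_cpow hx0]; push_cast; ring_nf
  have e2 : ((1 : ℂ) - x) ^ ((b : ℂ) - 1) = (((1-x) ^ (b-1) : ℝ) : ℂ) := by
    rw [show ((1:ℂ) - x) = (((1 - x : ℝ)):ℂ) by push_cast; ring, Complex.ofReal_cpow hx1]
    push_cast; ring_nf
  simp [e1, e2, ← Complex.ofReal_mul]

lemma realBeta_integral {a b : ℝ} (ha : 0 < a) (hb : 0 < b) :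
    ∫ t in Ioo (0:ℝ) 1, t ^ (a - 1) * (1 - t) ^ (b - 1)
      = Real.Gamma a * Real.Gamma b / Real.Gamma (a + b) := by
  have key := Complex.Gamma_mul_Gamma_eq_betaIntegral
      (show 0 < ((a:ℂ)).re by simpa using ha) (show 0 < ((b:ℂ)).re by simpa using hb)
  have hbeta : Complex.betaIntegral a b
      = ((∫ t in Ioo (0:ℝ) 1, t ^ (a - 1) * (1 - t) ^ (b - 1) : ℝ) : ℂ) := by
    rw [Complex.betaIntegral, intervalIntegral.integral_of_le zero_le_one,
      MeasureTheory.integral_Ioc_eq_integral_Ioo]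
    refine Eq.trans (setIntegral_congr_fun measurableSet_Ioo fun x hx => ?_) integral_ofReal
    have hx0 : (0:ℝ) ≤ x := hx.1.le
    have hx1 : (0:ℝ) ≤ 1 - x := by linarith [hx.2]
    have e1 : (x : ℂ) ^ ((a : ℂ) - 1) = ((x ^ (a-1) : ℝ) : ℂ) := by
      rw [Complex.ofReal_cpow hx0]; push_cast; ring_nf
    have e2 : ((1 : ℂ) - x) ^ ((b : ℂ) - 1) = (((1-x) ^ (b-1) : ℝ) : ℂ) := by
      rw [show ((1:ℂ) - x) = (((1 - x : ℝ)):ℂ) by push_cast; ring, Complex.ofReal_cpow hx1]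
      push_cast; ring_nf
    simp [e1, e2, ← Complex.ofReal_mul]
  rw [hbeta] at key
  have hG : ∀ x : ℝ, Complex.Gamma (x : ℂ) = ((Real.Gamma x : ℝ) : ℂ) := fun x =>
    Complex.Gamma_ofReal x
  rw [hG, hG, show ((a:ℂ) + b) = ((a + b : ℝ) : ℂ) by push_cast; ring, hG] at key
  have : (Real.Gamma a * Real.Gamma b : ℝ)
      = Real.Gamma (a+b) * ∫ t in Ioo (0:ℝ) 1, t ^ (a - 1) * (1 - t) ^ (b - 1) := by
    exact_mod_cast key
  have hGab : Real.Gamma (a+b) ≠ 0 := (Real.Gamma_pos_of_pos (by linarith)).ne'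
  field_simp [this]
  linarith [this]


lemma measurable_rpow_const (c : ℝ) : Measurable fun x : ℝ => x ^ c := by
  have h : (fun x : ℝ => x ^ c) = fun x =>
      if x = 0 then (if c = 0 then 1 else 0)
      else if x < 0 then Real.exp (Real.log x * c) * Real.cos (c * Real.pi)
      else Real.exp (Real.log x * c) := by
    funext x
    rcases lt_trichotomy x 0 with h|h|h
    · rw [if_neg h.ne, if_pos h, Real.rpow_def_of_neg h, mul_comm c]
    · subst h
      rw [if_pos rfl]
      split_ifs with hc
      · simp [hc]
      · exact Real.zero_rpow hc
    · rw [if_neg h.ne', if_neg (not_lt.2 h.le), Real.rpow_def_of_pos h]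
  rw [h]
  refine Measurable.ite (measurableSet_eq_fun measurable_id measurable_const)
    measurable_const ?_
  refine Measurable.ite (measurableSet_lt measurable_id measurable_const) ?_ ?_
  · exact ((Real.measurable_log.mul measurable_const).exp).mul measurable_const
  · exact (Real.measurable_log.mul measurable_const).exp

lemma measurable_simplexCoords (n : ℕ) (k : Fin (n + 1)) :
    Measurable fun x : Fin n → ℝ => simplexCoords n x k := by
  refine Fin.lastCases ?_ ?_ k
  · simp only [simplexCoords, Fin.snoc_last]
    exact (measurable_const.sub (Finset.measurable_sum univ fun i _ => measurable_pi_apply i) :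
        Measurable fun x : Fin n → ℝ => 1 - ∑ i, x i)
  · intro i
    simpa [simplexCoords] using measurable_pi_apply i

lemma measurable_simplexProd (n : ℕ) (β : Fin (n + 1) → ℝ) :
    Measurable fun x : Fin n → ℝ => ∏ k, (simplexCoords n x k) ^ (β k - 1) :=
  Finset.measurable_prod univ fun k _ =>
    (measurable_rpow_const (β k - 1)).comp (measurable_simplexCoords n k)

lemma measurableSet_simplex (n : ℕ) :
    MeasurableSet {x : Fin n → ℝ | (∀ i, 0 < x i) ∧ ∑ i, x i < 1} := by
  have : {x : Fin n → ℝ | (∀ i, 0 < x i) ∧ ∑ i, x i < 1}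
      = (⋂ i, {x : Fin n → ℝ | 0 < x i}) ∩ {x : Fin n → ℝ | ∑ i, x i < 1} := by
    ext x; simp [Set.mem_iInter]
  rw [this]
  exact (MeasurableSet.iInter fun i =>
      measurableSet_lt measurable_const (measurable_pi_apply i)).inter
    (measurableSet_lt (Finset.measurable_sum univ fun i _ => measurable_pi_apply i)
      measurable_const)

lemma simplexProd_pos {n : ℕ} {β : Fin (n + 1) → ℝ} {x : Fin n → ℝ}
    (hx : x ∈ {x : Fin n → ℝ | (∀ i, 0 < x i) ∧ ∑ i, x i < 1}) :
    0 < ∏ k, (simplexCoords n x k) ^ (β k - 1) := by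
  refine Finset.prod_pos fun k _ => Real.rpow_pos_of_pos ?_ _
  refine Fin.lastCases ?_ ?_ k
  · simpa [simplexCoords] using sub_pos.2 hx.2
  · intro i; simpa [simplexCoords] using hx.1 i

lemma measurableSet_scaledSimplex (n : ℕ) (u : ℝ) :
    MeasurableSet {x : Fin n → ℝ | (∀ i, 0 < x i) ∧ ∑ i, x i < u} := by
  have : {x : Fin n → ℝ | (∀ i, 0 < x i) ∧ ∑ i, x i < u}
      = (⋂ i, {x : Fin n → ℝ | 0 < x i}) ∩ {x : Fin n → ℝ | ∑ i, x i < u} := by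
    ext x; simp [Set.mem_iInter]
  rw [this]
  exact (MeasurableSet.iInter fun i =>
      measurableSet_lt measurable_const (measurable_pi_apply i)).inter
    (measurableSet_lt (Finset.measurable_sum univ fun i _ => measurable_pi_apply i)
      measurable_const)

lemma snoc_smul (n : ℕ) (u : ℝ) (y : Fin n → ℝ) (c : ℝ) :
    (Fin.snoc (u • y) (u * c) : Fin (n+1) → ℝ) = fun j => u * (Fin.snoc y c : Fin (n+1) → ℝ) j := by
  funext j
  refine Fin.lastCases ?_ ?_ j
  · simp
  · intro i; simp

lemma scaled_simplex_integral {n : ℕ} (γ : Fin (n + 1) → ℝ) (hγ : ∀ j, 0 < γ j)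
    (hint : IntegrableOn (fun z => ∏ j, (simplexCoords n z j) ^ (γ j - 1))
      {z : Fin n → ℝ | (∀ i, 0 < z i) ∧ ∑ i, z i < 1}) {u : ℝ} (hu : 0 < u) :
    IntegrableOn (fun y : Fin n → ℝ => ∏ j, ((Fin.snoc y (u - ∑ i, y i) : Fin (n+1) → ℝ) j) ^ (γ j - 1))
      {y : Fin n → ℝ | (∀ i, 0 < y i) ∧ ∑ i, y i < u} ∧
    ∫ y in {y : Fin n → ℝ | (∀ i, 0 < y i) ∧ ∑ i, y i < u},
        ∏ j, ((Fin.snoc y (u - ∑ i, y i) : Fin (n+1) → ℝ) j) ^ (γ j - 1)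
      = u ^ ((∑ j, γ j) - 1) *
        ∫ z in {z : Fin n → ℝ | (∀ i, 0 < z i) ∧ ∑ i, z i < 1},
          ∏ j, (simplexCoords n z j) ^ (γ j - 1) := by
  set S := {z : Fin n → ℝ | (∀ i, 0 < z i) ∧ ∑ i, z i < 1} with hS
  set T := {y : Fin n → ℝ | (∀ i, 0 < y i) ∧ ∑ i, y i < u} with hT
  set F : (Fin n → ℝ) → ℝ := fun y => ∏ j, ((Fin.snoc y (u - ∑ i, y i) : Fin (n+1) → ℝ) j) ^ (γ j - 1)
    with hF
  set f : (Fin n → ℝ) → ℝ := fun z => ∏ j, (simplexCoords n z j) ^ (γ j - 1) with hf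
  have hmem : ∀ y : Fin n → ℝ, u • y ∈ T ↔ y ∈ S := by
    intro y
    constructor
    · rintro ⟨h1, h2⟩
      refine ⟨fun i => ?_, ?_⟩
      · have h := h1 i; simp only [Pi.smul_apply, smul_eq_mul] at h
        nlinarith [h, hu]
      · have : ∑ i, u * y i < u := by simpa [smul_eq_mul] using h2
        rw [← Finset.mul_sum] at this
        nlinarith [this]
    · rintro ⟨h1, h2⟩
      refine ⟨fun i => by simpa using mul_pos hu (h1 i), ?_⟩
      have : ∑ i, (u • y) i = u * ∑ i, y i := by simp [Finset.mul_sum]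
      rw [this]
      nlinarith [h2]
  have hFsmul : ∀ y ∈ S, F (u • y) = u ^ ((∑ j, γ j) - (n + 1 : ℝ)) * f y := by
    intro y hy
    have hsum : u - ∑ i, (u • y) i = u * (1 - ∑ i, y i) := by
      simp [Finset.mul_sum, mul_sub]
    rw [hF]
    simp only
    rw [hsum, snoc_smul]
    have hcoord : ∀ j, (0:ℝ) ≤ (Fin.snoc y (1 - ∑ i, y i) : Fin (n+1) → ℝ) j := by
      intro j
      refine Fin.lastCases ?_ ?_ j
      · simp only [Fin.snoc_last]; linarith [hy.2]
      · intro i; simp only [Fin.snoc_castSucc]; exact (hy.1 i).le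
    have : ∀ j : Fin (n+1), (u * (Fin.snoc y (1 - ∑ i, y i) : Fin (n+1) → ℝ) j) ^ (γ j - 1)
        = u ^ (γ j - 1) * ((Fin.snoc y (1 - ∑ i, y i) : Fin (n+1) → ℝ) j) ^ (γ j - 1) := fun j =>
      Real.mul_rpow hu.le (hcoord j)
    rw [Finset.prod_congr rfl fun j _ => this j, Finset.prod_mul_distrib]
    congr 1
    · rw [← Real.rpow_sum_of_pos hu]
      congr 1
      rw [Finset.sum_sub_distrib]
      simp [Finset.card_univ]
  have hindic : ∀ y : Fin n → ℝ,
      Set.indicator T F (u • y) = u ^ ((∑ j, γ j) - (n + 1 : ℝ)) * Set.indicator S f y := by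
    intro y
    by_cases hy : y ∈ S
    · rw [Set.indicator_of_mem ((hmem y).2 hy), Set.indicator_of_mem hy, hFsmul y hy]
    · rw [Set.indicator_of_notMem (fun h => hy ((hmem y).1 h)),
        Set.indicator_of_notMem hy, mul_zero]
  have hfinrank : Module.finrank ℝ (Fin n → ℝ) = n := Module.finrank_fin_fun ℝ
  have hcs := MeasureTheory.Measure.integral_comp_smul (volume : Measure (Fin n → ℝ))
    (Set.indicator T F) u
  rw [hfinrank] at hcs
  have hlhs : ∫ y : Fin n → ℝ, Set.indicator T F (u • y)
      = u ^ ((∑ j, γ j) - (n + 1 : ℝ)) * ∫ y in S, f y := by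
    rw [show (fun y : Fin n → ℝ => Set.indicator T F (u • y))
        = fun y => u ^ ((∑ j, γ j) - (n + 1 : ℝ)) * Set.indicator S f y from funext hindic]
    rw [MeasureTheory.integral_const_mul, MeasureTheory.integral_indicator (by
      rw [hS]; exact measurableSet_scaledSimplex n 1)]
  have hint' : Integrable (Set.indicator S f) := by
    rwa [integrable_indicator_iff (by rw [hS]; exact measurableSet_scaledSimplex n 1)]
  have hintT : Integrable (Set.indicator T F) := by
    rw [← MeasureTheory.integrable_comp_smul_iff volume (Set.indicator T F) hu.ne']
    rw [show (fun y : Fin n → ℝ => Set.indicator T F (u • y))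
        = fun y => u ^ ((∑ j, γ j) - (n + 1 : ℝ)) * Set.indicator S f y from funext hindic]
    exact hint'.const_mul _
  constructor
  · rwa [← integrable_indicator_iff (by rw [hT]; exact measurableSet_scaledSimplex n u)]
  · rw [← MeasureTheory.integral_indicator (by rw [hT]; exact measurableSet_scaledSimplex n u)]
    rw [hlhs] at hcs
    have hupow : |((u ^ n : ℝ))⁻¹| = (u ^ n)⁻¹ := abs_of_nonneg (by positivity)
    rw [hupow, smul_eq_mul] at hcs
    have hun : (0:ℝ) < u ^ n := by positivity
    have : ∫ y, Set.indicator T F y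
        = u ^ n * (u ^ ((∑ j, γ j) - (n + 1 : ℝ)) * ∫ y in S, f y) := by
      field_simp at hcs ⊢
      linarith [hcs]
    rw [this, ← mul_assoc]
    congr 1
    rw [show (u : ℝ) ^ n = u ^ (n : ℝ) from (Real.rpow_natCast u n).symm,
      ← Real.rpow_add hu]
    ring_nf

lemma snoc_cons_zero (n : ℕ) (t c : ℝ) (y : Fin n → ℝ) :
    (Fin.snoc (Fin.cons t y) c : Fin (n+2) → ℝ) 0 = t := by
  rw [show (0 : Fin (n+2)) = Fin.castSucc 0 by simp, Fin.snoc_castSucc, Fin.cons_zero]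

lemma snoc_cons_succ (n : ℕ) (t c : ℝ) (y : Fin n → ℝ) (j : Fin (n+1)) :
    (Fin.snoc (Fin.cons t y) c : Fin (n+2) → ℝ) j.succ
      = (Fin.snoc y c : Fin (n+1) → ℝ) j := by
  refine Fin.lastCases ?_ ?_ j
  · rw [Fin.succ_last]; simp
  · intro i
    rw [Fin.succ_castSucc, Fin.snoc_castSucc, Fin.cons_succ, Fin.snoc_castSucc]

lemma cons_mem_simplex_iff (n : ℕ) (t : ℝ) (y : Fin n → ℝ) :
    (Fin.cons t y ∈ {x : Fin (n+1) → ℝ | (∀ i, 0 < x i) ∧ ∑ i, x i < 1})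
      ↔ (0 < t ∧ (∀ i, 0 < y i) ∧ ∑ i, y i < 1 - t) := by
  constructor
  · rintro ⟨h1, h2⟩
    rw [Fin.sum_cons] at h2
    exact ⟨by simpa using h1 0, fun i => by simpa using h1 i.succ, by linarith⟩
  · rintro ⟨h1, h2, h3⟩
    refine ⟨fun i => ?_, ?_⟩
    · refine Fin.cases ?_ ?_ i
      · simpa using h1
      · intro j; simpa using h2 j
    · rw [Fin.sum_cons]; linarith

lemma dirichletProd_cons (n : ℕ) (β : Fin (n+2) → ℝ) (t : ℝ) (y : Fin n → ℝ) :
    ∏ k, (simplexCoords (n+1) (Fin.cons t y) k) ^ (β k - 1)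
      = t ^ (β 0 - 1) *
        ∏ j, ((Fin.snoc y ((1 - t) - ∑ i, y i) : Fin (n+1) → ℝ) j) ^ (β j.succ - 1) := by
  have hsum : ∑ i, (Fin.cons t y : Fin (n+1) → ℝ) i = t + ∑ i, y i := by
    rw [Fin.sum_cons]
  rw [show (fun k => (simplexCoords (n+1) (Fin.cons t y) k) ^ (β k - 1))
    = fun k => ((Fin.snoc (Fin.cons t y) ((1 - t) - ∑ i, y i) : Fin (n+2) → ℝ) k) ^ (β k - 1) by
      funext k
      simp only [simplexCoords, hsum]
      ring_nf]
  rw [Fin.prod_univ_succ, snoc_cons_zero]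
  congr 1
  exact Finset.prod_congr rfl fun j _ => by rw [snoc_cons_succ]

theorem dirichlet_integral (n : ℕ) (β : Fin (n+1) → ℝ) (hβ : ∀ k, 0 < β k) :
    IntegrableOn (fun x => ∏ k, (simplexCoords n x k) ^ (β k - 1))
      {x : Fin n → ℝ | (∀ i, 0 < x i) ∧ ∑ i, x i < 1} ∧
    ∫ x in {x : Fin n → ℝ | (∀ i, 0 < x i) ∧ ∑ i, x i < 1},
        ∏ k, (simplexCoords n x k) ^ (β k - 1)
      = (∏ k, Real.Gamma (β k)) / Real.Gamma (∑ k, β k) := by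
  induction n with
  | zero =>
    have hS : {x : Fin 0 → ℝ | (∀ i, 0 < x i) ∧ ∑ i, x i < 1} = Set.univ := by
      ext x; simp
    have hf : (fun x : Fin 0 → ℝ => ∏ k, (simplexCoords 0 x k) ^ (β k - 1))
        = fun _ => (1:ℝ) := by
      funext x
      rw [show (∏ k, (simplexCoords 0 x k) ^ (β k - 1))
        = (simplexCoords 0 x 0) ^ (β 0 - 1) from Fin.prod_univ_one _]
      have : simplexCoords 0 x 0 = 1 := by
        rw [show (0 : Fin 1) = Fin.last 0 from rfl, simplexCoords, Fin.snoc_last]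
        simp
      rw [this, Real.one_rpow]
    have hvol : (volume : Measure (Fin 0 → ℝ)) Set.univ = 1 := by
      rw [MeasureTheory.volume_pi, MeasureTheory.Measure.pi_univ]
      simp
    rw [hS, hf]
    constructor
    · exact integrableOn_const (by rw [hvol]; exact ENNReal.one_ne_top) (by simp)
    · rw [Measure.restrict_univ, MeasureTheory.integral_const, MeasureTheory.measureReal_def, hvol]
      rw [show (∑ k, β k) = β 0 from Fin.sum_univ_one _,
        show (∏ k, Real.Gamma (β k)) = Real.Gamma (β 0) from Fin.prod_univ_one _]
      have : Real.Gamma (β 0) ≠ 0 := (Real.Gamma_pos_of_pos (hβ 0)).ne'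
      simp [div_self this]
  | succ n ih =>
    -- notation
    set γ : Fin (n+1) → ℝ := fun j => β j.succ with hγdef
    have hγ : ∀ j, 0 < γ j := fun j => hβ j.succ
    obtain ⟨ihInt, ihVal⟩ := ih γ hγ
    set Ihat : ℝ := ∫ z in {z : Fin n → ℝ | (∀ i, 0 < z i) ∧ ∑ i, z i < 1},
        ∏ j, (simplexCoords n z j) ^ (γ j - 1) with hIhat
    set a : ℝ := β 0 with ha
    have ha0 : 0 < a := hβ 0
    set B : ℝ := ∑ j, γ j with hB
    have hB0 : 0 < B := Finset.sum_pos (fun j _ => hγ j) ⟨0, Finset.mem_univ 0⟩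
    set S : Set (Fin (n+1) → ℝ) := {x | (∀ i, 0 < x i) ∧ ∑ i, x i < 1} with hSdef
    set f : (Fin (n+1) → ℝ) → ℝ := fun x => ∏ k, (simplexCoords (n+1) x k) ^ (β k - 1)
      with hfdef
    set G : (Fin (n+1) → ℝ) → ℝ := Set.indicator S f with hGdef
    set H : ℝ × (Fin n → ℝ) → ℝ := fun p => G (Fin.cons p.1 p.2) with hHdef
    set Fin2 : ℝ → (Fin n → ℝ) → ℝ := fun t y =>
      ∏ j, ((Fin.snoc y ((1 - t) - ∑ i, y i) : Fin (n+1) → ℝ) j) ^ (γ j - 1) with hFin2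
    -- slice description
    have hslice : ∀ t : ℝ, (fun y => H (t, y))
        = Set.indicator (Set.Ioo (0:ℝ) 1)
            (fun t' => Set.indicator {y : Fin n → ℝ | (∀ i, 0 < y i) ∧ ∑ i, y i < 1 - t'}
              (fun y => t' ^ (a - 1) * Fin2 t' y)) t := by
      intro t
      by_cases ht : t ∈ Set.Ioo (0:ℝ) 1
      · rw [Set.indicator_of_mem ht]
        funext y
        by_cases hy : y ∈ {y : Fin n → ℝ | (∀ i, 0 < y i) ∧ ∑ i, y i < 1 - t}
        · rw [Set.indicator_of_mem hy, hHdef]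
          simp only
          rw [hGdef, Set.indicator_of_mem ((cons_mem_simplex_iff n t y).2 ⟨ht.1, hy.1, hy.2⟩),
            hfdef]
          simp only
          rw [dirichletProd_cons n β t y]
        · rw [Set.indicator_of_notMem hy]
          have hnotmem : Fin.cons t y ∉ S := by
            intro hmem
            exact hy ⟨((cons_mem_simplex_iff n t y).1 hmem).2.1,
              ((cons_mem_simplex_iff n t y).1 hmem).2.2⟩
          show G (Fin.cons t y) = 0
          rw [hGdef, Set.indicator_of_notMem hnotmem]
      · rw [Set.indicator_of_notMem ht]
        funext y
        have hnotmem : Fin.cons t y ∉ S := by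
          intro hmem
          obtain ⟨h1, h2, h3⟩ := (cons_mem_simplex_iff n t y).1 hmem
          have hsum : 0 ≤ ∑ i, y i := Finset.sum_nonneg fun i _ => (h2 i).le
          exact ht ⟨h1, by linarith⟩
        show G (Fin.cons t y) = (0 : (Fin n → ℝ) → ℝ) y
        rw [hGdef, Set.indicator_of_notMem hnotmem]
        rfl
    -- scaled integrals for t ∈ (0,1)
    have hscaled : ∀ t ∈ Set.Ioo (0:ℝ) 1,
        IntegrableOn (Fin2 t) {y : Fin n → ℝ | (∀ i, 0 < y i) ∧ ∑ i, y i < 1 - t} ∧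
        ∫ y in {y : Fin n → ℝ | (∀ i, 0 < y i) ∧ ∑ i, y i < 1 - t}, Fin2 t y
          = (1 - t) ^ (B - 1) * Ihat := by
      intro t ht
      have h := scaled_simplex_integral γ hγ ihInt (u := 1 - t) (by linarith [ht.2])
      exact h
    -- measurability
    have hconsMeas : Measurable fun p : ℝ × (Fin n → ℝ) => (Fin.cons p.1 p.2 : Fin (n+1) → ℝ) := by
      rw [measurable_pi_iff]; intro i
      refine Fin.cases ?_ ?_ i
      · simpa using measurable_fst
      · intro j; simp only [Fin.cons_succ]; exact (measurable_pi_apply j).comp measurable_snd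
    have hGmeas : Measurable G :=
      (measurable_simplexProd (n+1) β).indicator (measurableSet_simplex (n+1))
    have hHmeas : Measurable H := hGmeas.comp hconsMeas
    -- nonnegativity of H
    have hHnonneg : ∀ p, 0 ≤ H p := by
      intro p
      rw [hHdef]
      simp only
      rw [hGdef]
      exact Set.indicator_nonneg (fun x hx => (simplexProd_pos hx).le) _
    -- slice integrability
    have hsliceInt : ∀ t : ℝ, Integrable (fun y => H (t, y)) := by
      intro t
      rw [hslice t]
      by_cases ht : t ∈ Set.Ioo (0:ℝ) 1
      · rw [Set.indicator_of_mem ht]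
        rw [integrable_indicator_iff (measurableSet_scaledSimplex n (1 - t))]
        exact ((hscaled t ht).1).const_mul _
      · rw [Set.indicator_of_notMem ht]
        exact integrable_zero _ _ _
    -- value of inner integral
    have hval : ∀ t : ℝ, ∫ y, H (t, y)
        = Set.indicator (Set.Ioo (0:ℝ) 1)
            (fun t' => t' ^ (a - 1) * ((1 - t') ^ (B - 1) * Ihat)) t := by
      intro t
      rw [hslice t]
      by_cases ht : t ∈ Set.Ioo (0:ℝ) 1
      · rw [Set.indicator_of_mem ht, Set.indicator_of_mem ht,
          MeasureTheory.integral_indicator (measurableSet_scaledSimplex n (1 - t)),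
          MeasureTheory.integral_const_mul, (hscaled t ht).2]
      · rw [Set.indicator_of_notMem ht, Set.indicator_of_notMem ht]
        simp
    -- measure preserving equivalence
    have hmp := volume_preserving_piFinSuccAbove (fun _ : Fin (n+1) => ℝ) 0
    set e := MeasurableEquiv.piFinSuccAbove (fun _ : Fin (n+1) => ℝ) 0 with hedef
    have hesymm : ∀ p : ℝ × (Fin n → ℝ), e.symm p = Fin.cons p.1 p.2 := by
      intro p
      show (Fin.insertNthEquiv (fun _ : Fin (n+1) => ℝ) 0) p = _
      rw [Fin.insertNthEquiv_zero]
      rfl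
    have hHe : ∀ p, H p = G (e.symm p) := by
      intro p; rw [hesymm p]
    -- integrability of H over the product
    have h1f : AEStronglyMeasurable H
        ((volume : Measure ℝ).prod (volume : Measure (Fin n → ℝ))) := by
      rw [← MeasureTheory.Measure.volume_eq_prod]
      exact hHmeas.aestronglyMeasurable
    have hnormint : Integrable (fun t => ∫ y, ‖H (t, y)‖) := by
      have : (fun t => ∫ y, ‖H (t, y)‖) = fun t =>
          Set.indicator (Set.Ioo (0:ℝ) 1)
            (fun t' => t' ^ (a - 1) * ((1 - t') ^ (B - 1) * Ihat)) t := by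
        funext t
        rw [← hval t]
        congr 1
        funext y
        rw [Real.norm_of_nonneg (hHnonneg (t, y))]
      rw [this]
      rw [integrable_indicator_iff measurableSet_Ioo]
      have := (realBeta_integrableOn ha0 hB0).mul_const Ihat
      exact IntegrableOn.congr_fun this (fun x hx => by ring) measurableSet_Ioo
    have hHint : Integrable H ((volume : Measure ℝ).prod (volume : Measure (Fin n → ℝ))) := by
      refine (integrable_prod_iff h1f).2 ⟨?_, ?_⟩
      · exact Filter.Eventually.of_forall fun t => hsliceInt t
      · exact hnormint
    -- integrability conclusion
    have hGint : Integrable G := by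
      have hH' : Integrable (G ∘ e.symm)
          ((volume : Measure ℝ).prod (volume : Measure (Fin n → ℝ))) := by
        refine hHint.congr (Filter.Eventually.of_forall fun p => ?_)
        rw [Function.comp_apply, ← hHe p]
      have hmps : MeasurePreserving e.symm
          ((volume : Measure ℝ).prod (volume : Measure (Fin n → ℝ)))
          (volume : Measure (Fin (n+1) → ℝ)) := by
        have := hmp.symm
        rwa [MeasureTheory.Measure.volume_eq_prod] at this
      exact (hmps.integrable_comp_emb e.symm.measurableEmbedding).1 hH'
    have hfint : IntegrableOn f S := by
      rwa [hGdef, integrable_indicator_iff (measurableSet_simplex (n+1))] at hGint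
    refine ⟨hfint, ?_⟩
    -- compute the integral
    have step1 : ∫ x in S, f x = ∫ x, G x := by
      rw [hGdef, MeasureTheory.integral_indicator (measurableSet_simplex (n+1))]
    have step2 : ∫ x, G x = ∫ p, H p
        ∂((volume : Measure ℝ).prod (volume : Measure (Fin n → ℝ))) := by
      have hmps : MeasurePreserving e.symm
          ((volume : Measure ℝ).prod (volume : Measure (Fin n → ℝ)))
          (volume : Measure (Fin (n+1) → ℝ)) := by
        have := hmp.symm
        rwa [MeasureTheory.Measure.volume_eq_prod] at this
      rw [← hmps.integral_comp' G]
      exact MeasureTheory.integral_congr_ae (Filter.Eventually.of_forall fun p => (hHe p).symm)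
    have step3 : ∫ p, H p
        ∂((volume : Measure ℝ).prod (volume : Measure (Fin n → ℝ)))
        = ∫ t, ∫ y, H (t, y) := MeasureTheory.integral_prod H hHint
    have step4 : ∫ t, (∫ y, H (t, y))
        = ∫ t in Set.Ioo (0:ℝ) 1, t ^ (a - 1) * ((1 - t) ^ (B - 1) * Ihat) := by
      rw [show (fun t => ∫ y, H (t, y)) = fun t =>
          Set.indicator (Set.Ioo (0:ℝ) 1)
            (fun t' => t' ^ (a - 1) * ((1 - t') ^ (B - 1) * Ihat)) t from funext hval]
      rw [MeasureTheory.integral_indicator measurableSet_Ioo]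
    have step5 : ∫ t in Set.Ioo (0:ℝ) 1, t ^ (a - 1) * ((1 - t) ^ (B - 1) * Ihat)
        = (Real.Gamma a * Real.Gamma B / Real.Gamma (a + B)) * Ihat := by
      rw [show (fun t => t ^ (a - 1) * ((1 - t) ^ (B - 1) * Ihat))
          = fun t => (t ^ (a - 1) * (1 - t) ^ (B - 1)) * Ihat from funext fun t => by ring]
      rw [MeasureTheory.integral_mul_const, realBeta_integral ha0 hB0]
    rw [step1, step2, step3, step4, step5, ihVal]
    -- final algebra
    have hsum : ∑ k, β k = a + B := by
      rw [Fin.sum_univ_succ]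
    have hprodG : ∏ k, Real.Gamma (β k) = Real.Gamma a * ∏ j, Real.Gamma (γ j) := by
      rw [Fin.prod_univ_succ]
    rw [hsum, hprodG]
    have hGB : Real.Gamma B ≠ 0 := (Real.Gamma_pos_of_pos hB0).ne'
    have hGaB : Real.Gamma (a + B) ≠ 0 := (Real.Gamma_pos_of_pos (by linarith)).ne'
    field_simp

lemma digamma_eq {u : ℝ} (hu : 0 < u) :
    digamma u = deriv Real.Gamma u / Real.Gamma u := by
  have hne : ∀ m : ℕ, u ≠ -m := fun m => by
    have : (0:ℝ) ≤ m := Nat.cast_nonneg m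
    intro h; rw [h] at hu; linarith
  have hdiff : DifferentiableAt ℝ Real.Gamma u := Real.differentiableAt_Gamma hne
  have hG : Real.Gamma u ≠ 0 := (Real.Gamma_pos_of_pos hu).ne'
  have := (hdiff.hasDerivAt.log hG).deriv
  rw [digamma, this]

lemma hasDerivAt_Gamma_pos {u : ℝ} (hu : 0 < u) :
    HasDerivAt Real.Gamma (deriv Real.Gamma u) u := by
  have hne : ∀ m : ℕ, u ≠ -m := fun m => by
    have : (0:ℝ) ≤ m := Nat.cast_nonneg m
    intro h; rw [h] at hu; linarith
  exact (Real.differentiableAt_Gamma hne).hasDerivAt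

lemma simplexCoords_mem_Ioo {n : ℕ} (hn : 1 ≤ n) {x : Fin n → ℝ}
    (hx : x ∈ {x : Fin n → ℝ | (∀ i, 0 < x i) ∧ ∑ i, x i < 1}) (j : Fin (n+1)) :
    simplexCoords n x j ∈ Set.Ioo (0:ℝ) 1 := by
  have hne : (Finset.univ : Finset (Fin n)).Nonempty := by
    refine ⟨⟨0, by omega⟩, Finset.mem_univ _⟩
  have hsumpos : 0 < ∑ i, x i :=
    Finset.sum_pos (fun i _ => hx.1 i) hne
  refine Fin.lastCases ?_ ?_ j
  · rw [simplexCoords, Fin.snoc_last]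
    constructor <;> [linarith [hx.2]; linarith]
  · intro i
    rw [simplexCoords, Fin.snoc_castSucc]
    refine ⟨hx.1 i, ?_⟩
    have : x i ≤ ∑ i', x i' := Finset.single_le_sum (fun i' _ => (hx.1 i').le) (Finset.mem_univ i)
    linarith [hx.2]

lemma dirichlet_log_moment (n : ℕ) (hn : 1 ≤ n) (α : Fin (n+1) → ℝ) (hα : ∀ k, 0 < α k)
    (j : Fin (n+1)) :
    IntegrableOn (fun x => Real.log (simplexCoords n x j) *
        ∏ k, (simplexCoords n x k) ^ (Function.update α j (α j + 1) k - 1))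
      {x : Fin n → ℝ | (∀ i, 0 < x i) ∧ ∑ i, x i < 1} ∧
    ∫ x in {x : Fin n → ℝ | (∀ i, 0 < x i) ∧ ∑ i, x i < 1},
        Real.log (simplexCoords n x j) *
          ∏ k, (simplexCoords n x k) ^ (Function.update α j (α j + 1) k - 1)
      = ((∏ k ∈ Finset.univ.erase j, Real.Gamma (α k)) * Real.Gamma (α j + 1)
          / Real.Gamma ((∑ k, α k) + 1)) *
        (digamma (α j + 1) - digamma ((∑ k, α k) + 1)) := by
  classical
  set S := {x : Fin n → ℝ | (∀ i, 0 < x i) ∧ ∑ i, x i < 1} with hSdef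
  set μ := (volume : Measure (Fin n → ℝ)).restrict S with hμ
  set F : ℝ → (Fin n → ℝ) → ℝ := fun s x =>
    ∏ k, (simplexCoords n x k) ^ (Function.update α j s k - 1) with hF
  set F' : ℝ → (Fin n → ℝ) → ℝ := fun s x =>
    Real.log (simplexCoords n x j) * F s x with hF'
  set R : (Fin n → ℝ) → ℝ := fun x =>
    ∏ k ∈ Finset.univ.erase j, (simplexCoords n x k) ^ (α k - 1) with hR
  have hdecomp : ∀ s x, F s x = (simplexCoords n x j) ^ (s - 1) * R x := by
    intro s x
    rw [hF]
    simp only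
    rw [← Finset.mul_prod_erase Finset.univ _ (Finset.mem_univ j), Function.update_self]
    congr 1
    refine Finset.prod_congr rfl fun k hk => ?_
    rw [Function.update_of_ne (Finset.mem_erase.1 hk).1]
  set s₀ : ℝ := α j + 1 with hs₀
  set ε : ℝ := α j / 4 with hε
  have hεpos : 0 < ε := by rw [hε]; linarith [hα j]
  set v : ℝ := α j - 2 * ε with hv
  have hvpos : 0 < v := by rw [hv, hε]; linarith [hα j]
  set bound : (Fin n → ℝ) → ℝ := fun x => ε⁻¹ * F v x with hbound
  have haemem : ∀ᵐ x ∂μ, x ∈ S := ae_restrict_mem (measurableSet_simplex n)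
  -- the dominated derivative theorem
  have key := hasDerivAt_integral_of_dominated_loc_of_deriv_le (F := F) (F' := F')
    (μ := μ) (bound := bound) (x₀ := s₀) (Metric.ball_mem_nhds s₀ hεpos)
    (Filter.Eventually.of_forall fun s =>
      ((measurable_simplexProd n (Function.update α j s)).aestronglyMeasurable))
    (dirichlet_integral n (Function.update α j s₀) (fun k => by
      rcases eq_or_ne k j with rfl | hk
      · rw [Function.update_self]; linarith [hα k]
      · rw [Function.update_of_ne hk]; exact hα k)).1
    (((measurable_simplexCoords n j).log.mul
      (measurable_simplexProd n (Function.update α j s₀))).aestronglyMeasurable)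
    (haemem.mono ?_) ?_ (haemem.mono ?_)
  · -- main conclusion
    obtain ⟨hint', hderiv⟩ := key
    set A : ℝ := ∑ k ∈ Finset.univ.erase j, α k with hA
    set c₁ : ℝ := ∏ k ∈ Finset.univ.erase j, Real.Gamma (α k) with hc₁
    have hAj : ∃ k : Fin (n+1), k ≠ j := by
      rcases eq_or_ne j ⟨0, by omega⟩ with rfl | hj
      · exact ⟨⟨1, by omega⟩, by simp [Fin.ext_iff]⟩
      · exact ⟨⟨0, by omega⟩, fun h => hj h.symm⟩
    obtain ⟨k₀, hk₀⟩ := hAj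
    have hApos : 0 < A := by
      rw [hA]
      exact Finset.sum_pos (fun k _ => hα k)
        ⟨k₀, Finset.mem_erase.2 ⟨hk₀, Finset.mem_univ _⟩⟩
    have hsum' : (∑ k, α k) = α j + A := by
      rw [hA, Finset.add_sum_erase Finset.univ α (Finset.mem_univ j)]
    have hs₀pos : 0 < s₀ := by rw [hs₀]; linarith [hα j]
    have hGform : ∀ s ∈ Set.Ioi (0:ℝ),
        (∫ a, F s a ∂μ) = c₁ * Real.Gamma s / Real.Gamma (s + A) := by
      intro s hs
      have hpos : ∀ m, 0 < Function.update α j s m := fun m => by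
        rcases eq_or_ne m j with rfl | hm
        · rw [Function.update_self]; exact hs
        · rw [Function.update_of_ne hm]; exact hα m
      have := (dirichlet_integral n (Function.update α j s) hpos).2
      rw [hμ]
      rw [show (∫ a, F s a ∂volume.restrict S)
          = ∫ x in S, ∏ k, (simplexCoords n x k) ^ (Function.update α j s k - 1) from rfl]
      rw [this]
      have hprod : ∏ k, Real.Gamma (Function.update α j s k) = Real.Gamma s * c₁ := by
        rw [← Finset.mul_prod_erase Finset.univ _ (Finset.mem_univ j), Function.update_self,
          hc₁]
        congr 1
        exact Finset.prod_congr rfl fun m hm => by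
          rw [Function.update_of_ne (Finset.mem_erase.1 hm).1]
      have hsum2 : ∑ k, Function.update α j s k = s + A := by
        rw [← Finset.add_sum_erase Finset.univ _ (Finset.mem_univ j), Function.update_self,
          hA]
        congr 1
        exact Finset.sum_congr rfl fun m hm => by
          rw [Function.update_of_ne (Finset.mem_erase.1 hm).1]
      rw [hprod, hsum2]
      ring
    have hGs₀A : Real.Gamma (s₀ + A) ≠ 0 := (Real.Gamma_pos_of_pos (by linarith)).ne'
    have hGs₀ : Real.Gamma s₀ ≠ 0 := (Real.Gamma_pos_of_pos hs₀pos).ne'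
    have hd1 : HasDerivAt (fun s => c₁ * Real.Gamma s) (c₁ * deriv Real.Gamma s₀) s₀ :=
      (hasDerivAt_Gamma_pos hs₀pos).const_mul c₁
    have hd2 : HasDerivAt (fun s => Real.Gamma (s + A)) (deriv Real.Gamma (s₀ + A)) s₀ := by
      have h1 : HasDerivAt (fun s : ℝ => s + A) 1 s₀ := (hasDerivAt_id s₀).add_const A
      have := HasDerivAt.comp s₀ (hasDerivAt_Gamma_pos (by linarith : (0:ℝ) < s₀ + A)) h1
      simpa [Function.comp_def] using this
    have hd : HasDerivAt (fun s => c₁ * Real.Gamma s / Real.Gamma (s + A))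
        ((c₁ * deriv Real.Gamma s₀ * Real.Gamma (s₀ + A)
          - c₁ * Real.Gamma s₀ * deriv Real.Gamma (s₀ + A)) / Real.Gamma (s₀ + A) ^ 2) s₀ :=
      hd1.div hd2 hGs₀A
    have heq : (fun s => ∫ a, F s a ∂μ) =ᶠ[nhds s₀]
        (fun s => c₁ * Real.Gamma s / Real.Gamma (s + A)) :=
      Filter.eventuallyEq_of_mem (isOpen_Ioi.mem_nhds (Set.mem_Ioi.2 hs₀pos)) hGform
    have hd' : HasDerivAt (fun s => ∫ a, F s a ∂μ)
        ((c₁ * deriv Real.Gamma s₀ * Real.Gamma (s₀ + A)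
          - c₁ * Real.Gamma s₀ * deriv Real.Gamma (s₀ + A)) / Real.Gamma (s₀ + A) ^ 2) s₀ :=
      hd.congr_of_eventuallyEq heq
    have hDeq : (∫ a, F' s₀ a ∂μ)
        = (c₁ * deriv Real.Gamma s₀ * Real.Gamma (s₀ + A)
          - c₁ * Real.Gamma s₀ * deriv Real.Gamma (s₀ + A)) / Real.Gamma (s₀ + A) ^ 2 :=
      hderiv.unique hd'
    constructor
    · exact hint'
    · have hfinal : (∫ x in S, Real.log (simplexCoords n x j) *
          ∏ k, (simplexCoords n x k) ^ (Function.update α j (α j + 1) k - 1))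
          = ∫ a, F' s₀ a ∂μ := rfl
      rw [hfinal, hDeq]
      rw [digamma_eq (show (0:ℝ) < α j + 1 by linarith [hα j]),
        digamma_eq (show (0:ℝ) < (∑ k, α k) + 1 by
          have := Finset.sum_pos (fun m (_ : m ∈ Finset.univ) => hα m)
            ⟨j, Finset.mem_univ j⟩
          linarith)]
      have he1 : (∑ k, α k) + 1 = s₀ + A := by rw [hsum', hs₀]; ring
      have he2 : α j + 1 = s₀ := hs₀.symm
      rw [he1, he2]
      field_simp
  · -- bound
    intro x hx s hs
    have hp := simplexCoords_mem_Ioo hn hx j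
    set p := simplexCoords n x j with hpdef
    have hppos : 0 < p := hp.1
    have hRpos : 0 < R x := by
      refine Finset.prod_pos fun k _ => Real.rpow_pos_of_pos ?_ _
      exact (simplexCoords_mem_Ioo hn hx k).1
    have hFpos : 0 < F s x := by
      rw [hdecomp]; exact mul_pos (Real.rpow_pos_of_pos hppos _) hRpos
    have habs : ‖F' s x‖ = |Real.log p| * F s x := by
      rw [hF']
      simp only
      rw [Real.norm_eq_abs, abs_mul, abs_of_pos hFpos]
    have hlog : |Real.log p| ≤ ε⁻¹ * p ^ (-ε) := by
      rw [abs_of_nonpos (Real.log_nonpos hppos.le hp.2.le), ← Real.log_inv]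
      have h1 : Real.log ((p⁻¹) ^ ε) = ε * Real.log p⁻¹ := Real.log_rpow (by positivity) ε
      have h2 : Real.log ((p⁻¹) ^ ε) ≤ (p⁻¹) ^ ε := by
        have := Real.log_le_sub_one_of_pos (show (0:ℝ) < (p⁻¹) ^ ε by positivity)
        linarith
      have h3 : ((p⁻¹) ^ ε : ℝ) = p ^ (-ε) := by
        rw [Real.inv_rpow hppos.le, ← Real.rpow_neg hppos.le]
      calc Real.log p⁻¹ = ε⁻¹ * (ε * Real.log p⁻¹) := by field_simp
        _ = ε⁻¹ * Real.log ((p⁻¹) ^ ε) := by rw [h1]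
        _ ≤ ε⁻¹ * ((p⁻¹) ^ ε) := mul_le_mul_of_nonneg_left h2 (by positivity)
        _ = ε⁻¹ * p ^ (-ε) := by rw [h3]
    have hexp : p ^ (-ε) * F s x ≤ F v x := by
      rw [hdecomp, hdecomp, ← mul_assoc, ← Real.rpow_add hppos]
      have : p ^ (-ε + (s - 1)) ≤ p ^ (v - 1) := by
        refine Real.rpow_le_rpow_of_exponent_ge hppos hp.2.le ?_
        have hs' : |s - s₀| < ε := by
          have := Metric.mem_ball.1 hs
          rwa [Real.dist_eq] at this
        have h := abs_lt.1 hs'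
        linarith [h.1]
      exact mul_le_mul_of_nonneg_right this hRpos.le
    calc ‖F' s x‖ = |Real.log p| * F s x := habs
      _ ≤ (ε⁻¹ * p ^ (-ε)) * F s x := by
          exact mul_le_mul_of_nonneg_right hlog hFpos.le
      _ = ε⁻¹ * (p ^ (-ε) * F s x) := by ring
      _ ≤ ε⁻¹ * F v x := by
          exact mul_le_mul_of_nonneg_left hexp (by positivity)
      _ = bound x := rfl
  · -- bound integrable
    refine Integrable.const_mul ?_ _
    exact (dirichlet_integral n (Function.update α j v) (fun k => by
      rcases eq_or_ne k j with rfl | hk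
      · rw [Function.update_self]; exact hvpos
      · rw [Function.update_of_ne hk]; exact hα k)).1
  · -- differentiability
    intro x hx s hs
    have hp := simplexCoords_mem_Ioo hn hx j
    have hfun : (fun s => F s x) = fun s => (simplexCoords n x j) ^ (s - 1) * R x :=
      funext fun s => hdecomp s x
    rw [hfun]
    have hd : HasDerivAt (fun s : ℝ => (simplexCoords n x j) ^ (s - 1))
        ((simplexCoords n x j) ^ (s - 1) * Real.log (simplexCoords n x j)) s := by
      have h1 : HasDerivAt (fun s : ℝ => s - 1) 1 s := (hasDerivAt_id s).sub_const 1
      have h2 := (Real.hasStrictDerivAt_const_rpow hp.1 (s - 1)).hasDerivAt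
      have := HasDerivAt.comp s h2 h1
      simpa [Function.comp_def] using this
    have := hd.mul_const (R x)
    rw [hF']
    simp only
    rw [hdecomp s x]
    convert this using 1
    · rfl
    · ring



/-- The Dirichlet expectation of the normalized Shannon entropy
`H̃(p) = (1/log C) ∑ p_k log(1/p_k)` (with `C = n+1` categories) equals
`(1/log C)·[ψ(α₀+1) - ∑ (α_k/α₀) ψ(α_k+1)]`. -/
theorem dirichlet_expected_normalized_entropy
    (n : ℕ) (hn : 1 ≤ n) (α : Fin (n + 1) → ℝ) (hα : ∀ k, 0 < α k)
    (α₀ : ℝ) (hα₀ : α₀ = ∑ k, α k) :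
    ∫ x in {x : Fin n → ℝ | (∀ i, 0 < x i) ∧ ∑ i, x i < 1},
        ((∑ k, simplexCoords n x k * Real.log (1 / simplexCoords n x k)) /
            Real.log (n + 1)) * dirichletDensity n α x
      = (1 / Real.log (n + 1)) *
        (digamma (α₀ + 1) - ∑ k, (α k / α₀) * digamma (α k + 1)) := by
  classical
  set S := {x : Fin n → ℝ | (∀ i, 0 < x i) ∧ ∑ i, x i < 1} with hSdef
  set L : ℝ := Real.log (n + 1) with hL
  set Z : ℝ := Real.Gamma (∑ k, α k) / ∏ k, Real.Gamma (α k) with hZ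
  set Sα : ℝ := ∑ k, α k with hSα
  have hSαpos : 0 < Sα := Finset.sum_pos (fun m _ => hα m) ⟨0, Finset.mem_univ 0⟩
  set g : Fin (n+1) → (Fin n → ℝ) → ℝ := fun k x =>
    (-(1/L) * Z) * (Real.log (simplexCoords n x k) *
      ∏ m, (simplexCoords n x m) ^ (Function.update α k (α k + 1) m - 1)) with hg
  -- pointwise identity on S
  have hpt : ∀ x ∈ S, ((∑ k, simplexCoords n x k * Real.log (1 / simplexCoords n x k)) / L)
      * dirichletDensity n α x = ∑ k, g k x := by
    intro x hx
    have hPk : ∀ k, (∏ m, (simplexCoords n x m) ^ (Function.update α k (α k + 1) m - 1))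
        = simplexCoords n x k * ∏ m, (simplexCoords n x m) ^ (α m - 1) := by
      intro k
      have hp : 0 < simplexCoords n x k := (simplexCoords_mem_Ioo hn hx k).1
      rw [← Finset.mul_prod_erase Finset.univ
          (fun m => (simplexCoords n x m) ^ (Function.update α k (α k + 1) m - 1))
          (Finset.mem_univ k),
        ← Finset.mul_prod_erase Finset.univ
          (fun m => (simplexCoords n x m) ^ (α m - 1)) (Finset.mem_univ k)]
      rw [show (∏ m ∈ Finset.univ.erase k,
            (simplexCoords n x m) ^ (Function.update α k (α k + 1) m - 1))
          = ∏ m ∈ Finset.univ.erase k, (simplexCoords n x m) ^ (α m - 1) from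
        Finset.prod_congr rfl fun m hm => by
          rw [Function.update_of_ne (Finset.mem_erase.1 hm).1]]
      rw [Function.update_self, ← mul_assoc]
      congr 1
      rw [show α k + 1 - 1 = 1 + (α k - 1) by ring, Real.rpow_add hp, Real.rpow_one]
    have hgx : ∀ k, g k x = -(Real.log (simplexCoords n x k) * simplexCoords n x k) *
        ((1/L) * Z * ∏ m, (simplexCoords n x m) ^ (α m - 1)) := by
      intro k
      rw [hg]
      simp only
      rw [hPk k]
      ring
    rw [dirichletDensity, ← hZ, Finset.sum_congr rfl fun k _ => hgx k, ← Finset.sum_mul]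
    rw [show (∑ k, simplexCoords n x k * Real.log (1 / simplexCoords n x k))
        = ∑ k, -(Real.log (simplexCoords n x k) * simplexCoords n x k) from
      Finset.sum_congr rfl fun k _ => by
        rw [one_div, Real.log_inv]; ring]
    ring
  rw [MeasureTheory.setIntegral_congr_fun (measurableSet_simplex n) hpt]
  rw [MeasureTheory.integral_finset_sum _ (fun k _ => by
    exact ((dirichlet_log_moment n hn α hα k).1).const_mul _)]
  have hterm : ∀ k, (∫ x in S, g k x)
      = (-(1/L) * Z) * (((∏ m ∈ Finset.univ.erase k, Real.Gamma (α m)) * Real.Gamma (α k + 1)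
          / Real.Gamma ((∑ m, α m) + 1)) *
        (digamma (α k + 1) - digamma ((∑ m, α m) + 1))) := by
    intro k
    rw [hg]
    simp only
    rw [MeasureTheory.integral_const_mul, (dirichlet_log_moment n hn α hα k).2]
  -- algebra
  have hGpos : ∀ y : ℝ, 0 < y → 0 < Real.Gamma y := fun y hy => Real.Gamma_pos_of_pos hy
  have hZk : ∀ k, Z * ((∏ m ∈ Finset.univ.erase k, Real.Gamma (α m)) * Real.Gamma (α k + 1)
      / Real.Gamma (Sα + 1)) = α k / Sα := by
    intro k
    have hprodsplit : ∏ m, Real.Gamma (α m)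
        = Real.Gamma (α k) * ∏ m ∈ Finset.univ.erase k, Real.Gamma (α m) :=
      (Finset.mul_prod_erase Finset.univ _ (Finset.mem_univ k)).symm
    rw [Real.Gamma_add_one (hα k).ne', Real.Gamma_add_one hSαpos.ne', hZ, hprodsplit]
    have h1 : Real.Gamma (α k) ≠ 0 := (hGpos _ (hα k)).ne'
    have h2 : Real.Gamma Sα ≠ 0 := (hGpos _ hSαpos).ne'
    have h3 : (∏ m ∈ Finset.univ.erase k, Real.Gamma (α m)) ≠ 0 := by
      refine Finset.prod_ne_zero_iff.2 fun m _ => (hGpos _ (hα m)).ne'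
    field_simp
  have hstep : ∀ k, (∫ x in S, g k x)
      = (α k / Sα) * ((1/L) * digamma (Sα + 1)) - (1/L) * ((α k / Sα) * digamma (α k + 1)) := by
    intro k
    rw [hterm k, ← hSα]
    have h := hZk k
    set C := (∏ m ∈ Finset.univ.erase k, Real.Gamma (α m)) * Real.Gamma (α k + 1)
      / Real.Gamma (Sα + 1) with hC
    calc (-(1/L) * Z) * (C * (digamma (α k + 1) - digamma (Sα + 1)))
        = -(1/L) * ((Z * C) * (digamma (α k + 1) - digamma (Sα + 1))) := by ring
      _ = -(1/L) * ((α k / Sα) * (digamma (α k + 1) - digamma (Sα + 1))) := by rw [h]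
      _ = (α k / Sα) * ((1/L) * digamma (Sα + 1))
          - (1/L) * ((α k / Sα) * digamma (α k + 1)) := by ring
  rw [Finset.sum_congr rfl fun k _ => hstep k, Finset.sum_sub_distrib]
  have hsum1 : (∑ k, (α k / Sα) * ((1/L) * digamma (Sα + 1)))
      = (1/L) * digamma (Sα + 1) := by
    rw [← Finset.sum_mul, ← Finset.sum_div, ← hSα, div_self hSαpos.ne', one_mul]
  rw [hsum1, hα₀, mul_sub, Finset.mul_sum]
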